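/- Let r ≥ 1 be an integer and let α₁ < -r/2 and α₂ < -r/2 be real numbers. Then there exists a constant C > 0 (depending only on r, α₁, α₂) such that for all reals A > 0 and B > 0, the integral ∫_{(0,∞)^r} (y₁+…+y_r+A)^{α₁} (y₁+…+y_r+B)^{α₂} dy₁…dy_r is finite and bounded by C·A^{α₁+r/2}·B^{α₂+r/2}. -/

import Mathlib

open MeasureTheory

/-- The open positive orthant in `ℝ^r`. -/
def posOrthant (r : ℕ) : Set (Fin r → ℝ) := {y | ∀ i, 0 < y i}

open Set

noncomputable def orthC (β : ℝ) (r : ℕ) : ℝ := ∏ k ∈ Finset.range r, (-(β + k + 1))⁻¹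

lemma orthC_pos {β : ℝ} {r : ℕ} (h : β < -(r : ℝ)) : 0 < orthC β r := by
  apply Finset.prod_pos
  intro k hk
  rw [Finset.mem_range] at hk
  have hk' : (k : ℝ) + 1 ≤ r := by exact_mod_cast hk
  have : β + k + 1 < 0 := by linarith
  exact inv_pos.2 (by linarith)

lemma measurableSet_posOrthant (r : ℕ) : MeasurableSet (posOrthant r) := by
  have : posOrthant r = Set.pi Set.univ fun _ => Ioi (0 : ℝ) := by
    ext y; simp [posOrthant, Set.mem_pi]
  rw [this]
  exact MeasurableSet.univ_pi fun _ => measurableSet_Ioi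

lemma meas_aux (r : ℕ) (c β : ℝ) :
    Measurable fun y : Fin r → ℝ => ENNReal.ofReal ((∑ i, y i + c) ^ β) := by
  fun_prop

lemma lint_base {β A : ℝ} (hβ : β < -1) (hA : 0 < A) :
    ∫⁻ t in Ioi (0 : ℝ), ENNReal.ofReal ((t + A) ^ β)
      = ENNReal.ofReal ((-(β + 1))⁻¹ * A ^ (β + 1)) := by
  have emb : MeasurableEmbedding (fun x : ℝ => x + A) :=
    (Homeomorph.addRight A).measurableEmbedding
  have mp : MeasurePreserving (fun x : ℝ => x + A) volume volume :=
    measurePreserving_add_right volume A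
  have hpre : (fun x : ℝ => x + A) ⁻¹' (Ioi A) = Ioi 0 := by ext x; simp
  have h1 := mp.setLIntegral_comp_preimage_emb emb (fun u => ENNReal.ofReal (u ^ β)) (Ioi A)
  rw [hpre] at h1
  rw [h1, ← ofReal_integral_eq_lintegral_ofReal (integrableOn_Ioi_rpow_of_lt hβ hA) ?_]
  · rw [integral_Ioi_rpow_of_lt hβ hA]
    congr 1
    rw [div_eq_mul_inv, ← neg_inv]
    ring
  · filter_upwards [ae_restrict_mem measurableSet_Ioi] with x hx
    exact Real.rpow_nonneg (le_of_lt (hA.trans hx)) β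

lemma lint_key : ∀ (r : ℕ) {β : ℝ}, β < -(r : ℝ) → ∀ {A : ℝ}, 0 < A →
    ∫⁻ y in posOrthant r, ENNReal.ofReal ((∑ i, y i + A) ^ β)
      = ENNReal.ofReal (orthC β r * A ^ (β + r)) := by
  intro r
  induction r with
  | zero =>
    intro β hβ A hA
    have h0 : posOrthant 0 = (univ : Set (Fin 0 → ℝ)) := by
      ext y; simp [posOrthant]
    rw [h0, Measure.restrict_univ]
    simp only [Finset.univ_eq_empty, Finset.sum_empty, zero_add]
    rw [lintegral_const]
    have hv : (volume : Measure (Fin 0 → ℝ)) univ = 1 := by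
      simp [volume_pi, Measure.pi_univ]
    rw [hv, mul_one]
    simp [orthC]
  | succ r ih =>
    intro β hβ A hA
    have hβr : β < -(r : ℝ) := by push_cast at hβ ⊢; linarith
    have hβ1 : β + r < -1 := by push_cast at hβ; linarith
    set e := MeasurableEquiv.piFinSuccAbove (fun _ : Fin (r + 1) => ℝ) 0 with he
    have mp := volume_preserving_piFinSuccAbove (fun _ : Fin (r + 1) => ℝ) 0
    have happ : ∀ y : Fin (r + 1) → ℝ, e y = (y 0, fun j => y (Fin.succAbove 0 j)) := fun y => rfl
    have hpre : posOrthant (r + 1) = e ⁻¹' (Ioi 0 ×ˢ posOrthant r) := by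
      ext y
      simp only [mem_preimage, happ, mem_prod, mem_Ioi, posOrthant, mem_setOf_eq]
      exact Fin.forall_iff_succAbove 0
    have hg : Measurable fun z : ℝ × (Fin r → ℝ) =>
        ENNReal.ofReal ((z.1 + (∑ i, z.2 i + A)) ^ β) := by fun_prop
    calc ∫⁻ y in posOrthant (r + 1), ENNReal.ofReal ((∑ i, y i + A) ^ β)
        = ∫⁻ y in e ⁻¹' (Ioi 0 ×ˢ posOrthant r),
            ENNReal.ofReal (((e y).1 + (∑ i, (e y).2 i + A)) ^ β) := by
          rw [← hpre]
          apply lintegral_congr_ae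
          filter_upwards with y
          rw [happ]
          congr 2
          rw [Fin.sum_univ_succAbove (fun i => y i) 0]
          ring
      _ = ∫⁻ z in Ioi 0 ×ˢ posOrthant r,
            ENNReal.ofReal ((z.1 + (∑ i, z.2 i + A)) ^ β) := by
          exact mp.setLIntegral_comp_preimage_emb e.measurableEmbedding
            (fun z : ℝ × (Fin r → ℝ) => ENNReal.ofReal ((z.1 + (∑ i, z.2 i + A)) ^ β))
            (Ioi 0 ×ˢ posOrthant r)
      _ = ∫⁻ t in Ioi (0:ℝ), ∫⁻ u in posOrthant r,
            ENNReal.ofReal ((t + (∑ i, u i + A)) ^ β) := by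
          rw [Measure.volume_eq_prod, ← Measure.prod_restrict,
            lintegral_prod _ hg.aemeasurable]
      _ = ∫⁻ t in Ioi (0:ℝ), ENNReal.ofReal (orthC β r * (t + A) ^ (β + r)) := by
          apply lintegral_congr_ae
          filter_upwards [ae_restrict_mem measurableSet_Ioi] with t ht
          have : ∀ u : Fin r → ℝ, ENNReal.ofReal ((t + (∑ i, u i + A)) ^ β)
              = ENNReal.ofReal ((∑ i, u i + (t + A)) ^ β) := by
            intro u; congr 2; ring
          simp_rw [this]
          have ht' : 0 < t := ht
          exact ih hβr (by linarith : (0:ℝ) < t + A)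
      _ = ENNReal.ofReal (orthC β r) * ∫⁻ t in Ioi (0:ℝ),
            ENNReal.ofReal ((t + A) ^ (β + r)) := by
          rw [← lintegral_const_mul _ (by fun_prop)]
          apply lintegral_congr_ae
          filter_upwards with t
          rw [ENNReal.ofReal_mul (orthC_pos hβr).le]
      _ = ENNReal.ofReal (orthC β (r + 1) * A ^ (β + (r + 1 : ℕ))) := by
          rw [lint_base hβ1 hA, ← ENNReal.ofReal_mul (orthC_pos hβr).le]
          congr 1
          have hrec : orthC β (r + 1) = orthC β r * (-(β + r + 1))⁻¹ := by
            rw [orthC, orthC, Finset.prod_range_succ]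
          rw [hrec]
          push_cast
          ring_nf

lemma sq_facts {r : ℕ} {α A : ℝ} (hα : α < -(r : ℝ)/2) (hA : 0 < A) :
    MemLp (fun y : Fin r → ℝ => (∑ i, y i + A) ^ α) 2 (volume.restrict (posOrthant r)) ∧
    ∫ y in posOrthant r, ((∑ i, y i + A) ^ α) ^ (2 : ℝ)
      = orthC (2 * α) r * A ^ (2 * α + r) := by
  have hO := measurableSet_posOrthant r
  have h2α : 2 * α < -(r : ℝ) := by linarith
  set μ := volume.restrict (posOrthant r)
  have hpos : ∀ᵐ y ∂μ, 0 < ∑ i, y i + A := by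
    filter_upwards [ae_restrict_mem hO] with y hy
    have hs : 0 ≤ ∑ i, y i := Finset.sum_nonneg fun i _ => (hy i).le
    linarith
  have hmf : Measurable fun y : Fin r → ℝ => (∑ i, y i + A) ^ α := by fun_prop
  have hm2 : Measurable fun y : Fin r → ℝ => (∑ i, y i + A) ^ (2 * α) := by fun_prop
  have hnn : 0 ≤ᵐ[μ] fun y : Fin r → ℝ => (∑ i, y i + A) ^ (2 * α) := by
    filter_upwards [hpos] with y hy
    exact Real.rpow_nonneg hy.le _
  have hint2 : Integrable (fun y : Fin r → ℝ => (∑ i, y i + A) ^ (2 * α)) μ := by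
    refine ⟨hm2.aestronglyMeasurable, ?_⟩
    rw [hasFiniteIntegral_iff_ofReal hnn]
    rw [lint_key r h2α hA]
    exact ENNReal.ofReal_lt_top
  have hcong : ∀ᵐ y ∂μ, (∑ i, y i + A) ^ (2 * α) = ((∑ i, y i + A) ^ α) ^ (2 : ℝ) := by
    filter_upwards [hpos] with y hy
    rw [show (2 * α) = α * 2 by ring, Real.rpow_mul hy.le]
  have hcongN : ∀ᵐ y ∂μ, (∑ i, y i + A) ^ (2 * α) = ((∑ i, y i + A) ^ α) ^ (2 : ℕ) := by
    filter_upwards [hcong] with y hy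
    rw [hy, ← Real.rpow_natCast ((∑ i, y i + A) ^ α) 2]
    norm_num
  constructor
  · exact (memLp_two_iff_integrable_sq hmf.aestronglyMeasurable).2 (hint2.congr hcongN)
  · rw [← integral_congr_ae hcong,
      integral_eq_lintegral_of_nonneg_ae hnn hm2.aestronglyMeasurable]
    rw [lint_key r h2α hA]
    exact ENNReal.toReal_ofReal
      (mul_pos (orthC_pos h2α) (Real.rpow_pos_of_pos hA _)).le

/-- For an integer `r ≥ 1` and reals `α₁, α₂ < -r/2`, there is `C > 0` (depending only on
`r, α₁, α₂`) such that for all `A, B > 0` the integral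
`∫_{(0,∞)^r} (y₁+…+y_r+A)^{α₁} (y₁+…+y_r+B)^{α₂} dy` is finite and at most
`C·A^{α₁+r/2}·B^{α₂+r/2}`. -/
theorem stmt_6 (r : ℕ) (hr : 1 ≤ r) (α₁ α₂ : ℝ)
    (h1 : α₁ < -(r : ℝ)/2) (h2 : α₂ < -(r : ℝ)/2) :
    ∃ C : ℝ, 0 < C ∧ ∀ A B : ℝ, 0 < A → 0 < B →
      IntegrableOn
        (fun y : Fin r → ℝ => (∑ i, y i + A) ^ α₁ * (∑ i, y i + B) ^ α₂)
        (posOrthant r) ∧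
      ∫ y in posOrthant r, (∑ i, y i + A) ^ α₁ * (∑ i, y i + B) ^ α₂
        ≤ C * A ^ (α₁ + r/2) * B ^ (α₂ + r/2) := by
  have h2α₁ : 2 * α₁ < -(r : ℝ) := by linarith
  have h2α₂ : 2 * α₂ < -(r : ℝ) := by linarith
  refine ⟨orthC (2 * α₁) r ^ ((1:ℝ)/2) * orthC (2 * α₂) r ^ ((1:ℝ)/2),
    mul_pos (Real.rpow_pos_of_pos (orthC_pos h2α₁) _)
      (Real.rpow_pos_of_pos (orthC_pos h2α₂) _), ?_⟩
  intro A B hA hB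
  have hO := measurableSet_posOrthant r
  set μ := volume.restrict (posOrthant r) with hμ
  obtain ⟨hmem1, hval1⟩ := sq_facts h1 hA
  obtain ⟨hmem2, hval2⟩ := sq_facts h2 hB
  have hposS : ∀ᵐ y ∂μ, 0 ≤ ∑ i, y i := by
    filter_upwards [ae_restrict_mem hO] with y hy
    exact Finset.sum_nonneg fun i _ => (hy i).le
  have hnn1 : 0 ≤ᵐ[μ] fun y : Fin r → ℝ => (∑ i, y i + A) ^ α₁ := by
    filter_upwards [hposS] with y hy
    exact Real.rpow_nonneg (by linarith) _
  have hnn2 : 0 ≤ᵐ[μ] fun y : Fin r → ℝ => (∑ i, y i + B) ^ α₂ := by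
    filter_upwards [hposS] with y hy
    exact Real.rpow_nonneg (by linarith) _
  have hint : Integrable
      (fun y : Fin r → ℝ => (∑ i, y i + A) ^ α₁ * (∑ i, y i + B) ^ α₂) μ := by
    have hs := hmem2.smul (𝕜 := ℝ) hmem1 (r := 1)
    rw [memLp_one_iff_integrable] at hs
    exact hs.congr (by filter_upwards with y; simp [smul_eq_mul])
  refine ⟨hint, ?_⟩
  have hconj : Real.HolderConjugate 2 2 := Real.HolderConjugate.two_two
  have key := integral_mul_le_Lp_mul_Lq_of_nonneg hconj hnn1 hnn2
    (by rw [show ENNReal.ofReal 2 = 2 by norm_num]; exact hmem1)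
    (by rw [show ENNReal.ofReal 2 = 2 by norm_num]; exact hmem2)
  rw [hval1, hval2] at key
  refine key.trans (le_of_eq ?_)
  rw [Real.mul_rpow (orthC_pos h2α₁).le (Real.rpow_pos_of_pos hA _).le,
    Real.mul_rpow (orthC_pos h2α₂).le (Real.rpow_pos_of_pos hB _).le,
    ← Real.rpow_mul hA.le, ← Real.rpow_mul hB.le,
    show (2 * α₁ + (r:ℝ)) * (1/2) = α₁ + r/2 by ring,
    show (2 * α₂ + (r:ℝ)) * (1/2) = α₂ + r/2 by ring]
  ring
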